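/- For all node signs ξ_r, η_r, ξ_s, η_s ∈ {−1, 1}, all a, b, h > 0, all E ∈ ℝ, and all μ ∈ ℝ with (1+μ)(1−2μ) ≠ 0, setting γ = b/a, the 2×2 real matrix (a·b·h/4) ∫_{−1}^{1} ∫_{−1}^{1} β_r(ξ,η)ᵀ χ_E β_s(ξ,η) dξ dη equals (E·h/(4(1+μ)(1−2μ))) · [[(1−μ)·γ·ξ_r ξ_s·(1 + η_r η_s/3), μ·ξ_r η_s], [μ·η_r ξ_s, (1−μ)·(η_r η_s/γ)·(1 + ξ_r ξ_s/3)]]. -/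

import Mathlib

open MeasureTheory Matrix

lemma int_quad (c0 c1 c2 : ℝ) :
    ∫ x in (-1:ℝ)..1, (c0 + c1*x + c2*x^2) = 2*c0 + 2/3*c2 := by
  have hder : ∀ x ∈ Set.uIcc (-1:ℝ) 1,
      HasDerivAt (fun x : ℝ => c0*x + c1/2*x^2 + c2/3*x^3) (c0 + c1*x + c2*x^2) x := by
    intro x _
    have h1 : HasDerivAt (fun x : ℝ => c0*x) c0 x := by
      simpa using (hasDerivAt_id x).const_mul c0
    have h2 : HasDerivAt (fun x : ℝ => c1/2*x^2) (c1*x) x := by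
      have := (hasDerivAt_pow 2 x).const_mul (c1/2)
      exact this.congr_deriv (by ring)
    have h3 : HasDerivAt (fun x : ℝ => c2/3*x^3) (c2*x^2) x := by
      have := (hasDerivAt_pow 3 x).const_mul (c2/3)
      exact this.congr_deriv (by ring)
    exact (h1.add h2).add h3
  have hint : IntervalIntegrable (fun x : ℝ => c0 + c1*x + c2*x^2) volume (-1) 1 :=
    (by continuity : Continuous fun x : ℝ => c0 + c1*x + c2*x^2).intervalIntegrable _ _
  rw [intervalIntegral.integral_eq_sub_of_hasDerivAt hder hint]
  ring

lemma dbl (c00 c10 c01 c20 c11 c02 c21 c12 c22 : ℝ) :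
    ∫ ξ in (-1:ℝ)..1, ∫ η in (-1:ℝ)..1,
      (c00 + c10*ξ + c01*η + c20*ξ^2 + c11*(ξ*η) + c02*η^2 + c21*(ξ^2*η)
        + c12*(ξ*η^2) + c22*(ξ^2*η^2))
      = 4*c00 + 4/3*c20 + 4/3*c02 + 4/9*c22 := by
  have inner : ∀ ξ : ℝ,
      (∫ η in (-1:ℝ)..1, (c00 + c10*ξ + c01*η + c20*ξ^2 + c11*(ξ*η) + c02*η^2
        + c21*(ξ^2*η) + c12*(ξ*η^2) + c22*(ξ^2*η^2)))
      = 2*(c00 + c10*ξ + c20*ξ^2) + 2/3*(c02 + c12*ξ + c22*ξ^2) := by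
    intro ξ
    rw [← int_quad (c00 + c10*ξ + c20*ξ^2) (c01 + c11*ξ + c21*ξ^2) (c02 + c12*ξ + c22*ξ^2)]
    apply intervalIntegral.integral_congr
    intro η _
    ring
  simp only [inner]
  rw [show (fun ξ : ℝ => 2*(c00 + c10*ξ + c20*ξ^2) + 2/3*(c02 + c12*ξ + c22*ξ^2))
      = fun ξ : ℝ => (2*c00 + 2/3*c02) + (2*c10 + 2/3*c12)*ξ + (2*c20 + 2/3*c22)*ξ^2
      from funext fun ξ => by ring]
  rw [int_quad]
  ring

/-- Strain–displacement matrix of the compatible bilinear rectangular element. -/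
noncomputable def betaC (a b ξr ηr ξ η : ℝ) : Matrix (Fin 3) (Fin 2) ℝ :=
  (1 / 2 : ℝ) • !![ξr * (1 + ηr * η) / a, 0;
                   0, ηr * (1 + ξr * ξ) / b;
                   ηr * (1 + ξr * ξ) / b, ξr * (1 + ηr * η) / a]

/-- Normal-deformation part of the plane-strain elasticity matrix. -/
noncomputable def chiE (E μ : ℝ) : Matrix (Fin 3) (Fin 3) ℝ :=
  (E / ((1 + μ) * (1 - 2 * μ))) • !![1 - μ, μ, 0; μ, 1 - μ, 0; 0, 0, 0]

section entries
variable (ξr ηr ξs ηs a b E μ ξ η : ℝ)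

lemma entry00 :
    ((betaC a b ξr ηr ξ η)ᵀ * chiE E μ * betaC a b ξs ηs ξ η) 0 0 =
    (E / ((1 + μ) * (1 - 2 * μ))) * (1-μ) * (ξr * (1 + ηr * η) / a) * (ξs * (1 + ηs * η) / a) / 4 := by
  simp only [Matrix.mul_apply, Matrix.transpose_apply]
  simp [betaC, chiE, Fin.sum_univ_three, Fin.sum_univ_two]
  ring

lemma entry01 :
    ((betaC a b ξr ηr ξ η)ᵀ * chiE E μ * betaC a b ξs ηs ξ η) 0 1 =
    (E / ((1 + μ) * (1 - 2 * μ))) * μ * (ξr * (1 + ηr * η) / a) * (ηs * (1 + ξs * ξ) / b) / 4 := by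
  simp only [Matrix.mul_apply, Matrix.transpose_apply]
  simp [betaC, chiE, Fin.sum_univ_three, Fin.sum_univ_two]
  ring

lemma entry10 :
    ((betaC a b ξr ηr ξ η)ᵀ * chiE E μ * betaC a b ξs ηs ξ η) 1 0 =
    (E / ((1 + μ) * (1 - 2 * μ))) * μ * (ηr * (1 + ξr * ξ) / b) * (ξs * (1 + ηs * η) / a) / 4 := by
  simp only [Matrix.mul_apply, Matrix.transpose_apply]
  simp [betaC, chiE, Fin.sum_univ_three, Fin.sum_univ_two]
  ring

lemma entry11 :
    ((betaC a b ξr ηr ξ η)ᵀ * chiE E μ * betaC a b ξs ηs ξ η) 1 1 =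
    (E / ((1 + μ) * (1 - 2 * μ))) * (1-μ) * (ηr * (1 + ξr * ξ) / b) * (ηs * (1 + ξs * ξ) / b) / 4 := by
  simp only [Matrix.mul_apply, Matrix.transpose_apply]
  simp [betaC, chiE, Fin.sum_univ_three, Fin.sum_univ_two]
  ring

end entries

set_option maxHeartbeats 1000000 in
theorem normal_stiffness_block_compatible
    (ξr ηr ξs ηs a b h E μ : ℝ)
    (hξr : ξr = -1 ∨ ξr = 1) (hηr : ηr = -1 ∨ ηr = 1)
    (hξs : ξs = -1 ∨ ξs = 1) (hηs : ηs = -1 ∨ ηs = 1)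
    (ha : 0 < a) (hb : 0 < b) (hh : 0 < h)
    (hμ : (1 + μ) * (1 - 2 * μ) ≠ 0) :
    (Matrix.of fun i j : Fin 2 =>
        (a * b * h / 4) *
          ∫ ξ in (-1:ℝ)..1, ∫ η in (-1:ℝ)..1,
            ((betaC a b ξr ηr ξ η)ᵀ * chiE E μ * betaC a b ξs ηs ξ η) i j) =
      (E * h / (4 * (1 + μ) * (1 - 2 * μ))) •
        !![(1 - μ) * (b / a) * (ξr * ξs) * (1 + ηr * ηs / 3), μ * (ξr * ηs);
           μ * (ηr * ξs), (1 - μ) * (ηr * ηs / (b / a)) * (1 + ξr * ξs / 3)] := by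
  obtain ⟨h1, h2⟩ := mul_ne_zero_iff.mp hμ
  have ha' : a ≠ 0 := ha.ne'
  have hb' : b ≠ 0 := hb.ne'
  set K : ℝ := E / ((1 + μ) * (1 - 2 * μ)) with hK
  ext i j
  fin_cases i <;> fin_cases j <;>
    simp only [Matrix.of_apply, Matrix.smul_apply, smul_eq_mul, Matrix.cons_val',
      Matrix.cons_val_zero, Matrix.cons_val_one, Matrix.head_cons, Matrix.empty_val',
      Matrix.cons_val_fin_one, Fin.zero_eta, Fin.mk_one, Fin.isValue]
  · have hI : (∫ ξ in (-1:ℝ)..1, ∫ η in (-1:ℝ)..1,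
        ((betaC a b ξr ηr ξ η)ᵀ * chiE E μ * betaC a b ξs ηs ξ η) 0 0)
        = 4*(K*(1-μ)*ξr*ξs/(4*a^2)) + 4/3*0 + 4/3*(K*(1-μ)*ξr*ξs/(4*a^2)*(ηr*ηs)) + 4/9*0 := by
      rw [← dbl (K*(1-μ)*ξr*ξs/(4*a^2)) 0 (K*(1-μ)*ξr*ξs/(4*a^2)*(ηr+ηs)) 0 0
        (K*(1-μ)*ξr*ξs/(4*a^2)*(ηr*ηs)) 0 0 0]
      apply intervalIntegral.integral_congr; intro ξ _
      apply intervalIntegral.integral_congr; intro η _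
      beta_reduce
      rw [entry00, hK]
      ring
    rw [hI, hK]
    field_simp
    ring
  · have hI : (∫ ξ in (-1:ℝ)..1, ∫ η in (-1:ℝ)..1,
        ((betaC a b ξr ηr ξ η)ᵀ * chiE E μ * betaC a b ξs ηs ξ η) 0 1)
        = 4*(K*μ*ξr*ηs/(4*a*b)) + 4/3*0 + 4/3*0 + 4/9*0 := by
      rw [← dbl (K*μ*ξr*ηs/(4*a*b)) (K*μ*ξr*ηs/(4*a*b)*ξs) (K*μ*ξr*ηs/(4*a*b)*ηr) 0
        (K*μ*ξr*ηs/(4*a*b)*(ηr*ξs)) 0 0 0 0]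
      apply intervalIntegral.integral_congr; intro ξ _
      apply intervalIntegral.integral_congr; intro η _
      beta_reduce
      rw [entry01, hK]
      ring
    rw [hI, hK]
    field_simp
    ring
  · have hI : (∫ ξ in (-1:ℝ)..1, ∫ η in (-1:ℝ)..1,
        ((betaC a b ξr ηr ξ η)ᵀ * chiE E μ * betaC a b ξs ηs ξ η) 1 0)
        = 4*(K*μ*ηr*ξs/(4*a*b)) + 4/3*0 + 4/3*0 + 4/9*0 := by
      rw [← dbl (K*μ*ηr*ξs/(4*a*b)) (K*μ*ηr*ξs/(4*a*b)*ξr) (K*μ*ηr*ξs/(4*a*b)*ηs) 0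
        (K*μ*ηr*ξs/(4*a*b)*(ξr*ηs)) 0 0 0 0]
      apply intervalIntegral.integral_congr; intro ξ _
      apply intervalIntegral.integral_congr; intro η _
      beta_reduce
      rw [entry10, hK]
      ring
    rw [hI, hK]
    field_simp
    ring
  · have hI : (∫ ξ in (-1:ℝ)..1, ∫ η in (-1:ℝ)..1,
        ((betaC a b ξr ηr ξ η)ᵀ * chiE E μ * betaC a b ξs ηs ξ η) 1 1)
        = 4*(K*(1-μ)*ηr*ηs/(4*b^2)) + 4/3*(K*(1-μ)*ηr*ηs/(4*b^2)*(ξr*ξs)) + 4/3*0 + 4/9*0 := by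
      rw [← dbl (K*(1-μ)*ηr*ηs/(4*b^2)) (K*(1-μ)*ηr*ηs/(4*b^2)*(ξr+ξs)) 0
        (K*(1-μ)*ηr*ηs/(4*b^2)*(ξr*ξs)) 0 0 0 0 0]
      apply intervalIntegral.integral_congr; intro ξ _
      apply intervalIntegral.integral_congr; intro η _
      beta_reduce
      rw [entry11, hK]
      ring
    rw [hI, hK]
    field_simp
    ring
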